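/- Under the Liouville transformation z(x) = ρ(r)^{1/4}u(r) with x = ∫₀^r √ρ, the transformed solution satisfies the jump conditions z(d+) = d₁ z(d−) and z^{[1]}(d+) = d₁⁻¹ z^{[1]}(d−) + d₂ z(d−), where d₁ = b₂^{1/4}, d₂ = g(d−) b₂^{−1/4} − g(d+) b₂^{1/4}, d = ∫₀^{b₁}√ρ; in particular d₂ = 0 if and only if g(d−) = b₂^{1/2} g(d+). -/
import Mathlib

open Filter Set

private lemma alg_id (a gs p ur vr : ℝ) (ha : 0 < a) :
    p * (1 / Real.sqrt a) * ((1:ℝ)/4) * a ^ ((1:ℝ)/4 - 1) * ur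
      + a ^ ((1:ℝ)/4) * (vr * (1 / Real.sqrt a))
    - ((1/4) * p / a ^ ((3:ℝ)/2) + gs) * (a ^ ((1:ℝ)/4) * ur)
    = (a ^ ((1:ℝ)/4))⁻¹ * vr - gs * (a ^ ((1:ℝ)/4) * ur) := by
  have ht : 0 < a ^ ((1:ℝ)/4) := Real.rpow_pos_of_pos ha _
  have pow4 : ∀ n : ℕ, (a ^ ((1:ℝ)/4)) ^ n = a ^ ((n:ℝ)/4) := by
    intro n
    rw [← Real.rpow_natCast (a ^ ((1:ℝ)/4)) n, ← Real.rpow_mul ha.le]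
    congr 1; ring
  have h2 : Real.sqrt a = (a ^ ((1:ℝ)/4)) ^ 2 := by
    rw [Real.sqrt_eq_rpow, pow4]; norm_num
  have h3 : a ^ ((1:ℝ)/4 - 1) = ((a ^ ((1:ℝ)/4)) ^ 3)⁻¹ := by
    rw [pow4, ← Real.rpow_neg ha.le]; norm_num
  have h6 : a ^ ((3:ℝ)/2) = (a ^ ((1:ℝ)/4)) ^ 6 := by
    rw [pow4]; norm_num
  rw [h2, h3, h6]
  have htne : a ^ ((1:ℝ)/4) ≠ 0 := ht.ne'
  field_simp
  ring

/-- Jump conditions under the Liouville transformation: with `z(x) = ρ(r)^{1/4}u(r)`,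
`z^{[1]} = z' − σz`, `d₁ = b₂^{1/4}`, `d₂ = g(d−)b₂^{−1/4} − g(d+)b₂^{1/4}`, one has
`z(d+) = d₁ z(d−)`, `z^{[1]}(d+) = d₁⁻¹ z^{[1]}(d−) + d₂ z(d−)`, and `d₂ = 0` iff
`g(d−) = b₂^{1/2} g(d+)`. -/
theorem stmt_8 (b₁ b₂ d c e r₀ r₁ ρm gdm gdp : ℝ) (ρ ρ' u u' g rr : ℝ → ℝ)
    (hb₂ : 0 < b₂) (hb₂' : b₂ ≠ 1) (hr₀ : r₀ < b₁) (hr₁ : b₁ < r₁)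
    (hc : c < d) (he : d < e) (hρm : 0 < ρm)
    (hρpos : ∀ r ∈ Set.Ioo r₀ r₁, r ≠ b₁ → 0 < ρ r)
    (hρ : ∀ r ∈ Set.Ioo r₀ r₁, r ≠ b₁ → HasDerivAt ρ (ρ' r) r)
    (hρm' : Filter.Tendsto ρ (nhdsWithin b₁ (Set.Iio b₁)) (nhds ρm))
    (hρp' : Filter.Tendsto ρ (nhdsWithin b₁ (Set.Ioi b₁)) (nhds (b₂ * ρm)))
    (hu : ∀ r ∈ Set.Ioo r₀ r₁, HasDerivAt u (u' r) r)
    (hucont : ContinuousAt u b₁) (hu'cont : ContinuousAt u' b₁)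
    (hrr : ∀ s ∈ Set.Ioo c d ∪ Set.Ioo d e,
      HasDerivAt rr (1 / Real.sqrt (ρ (rr s))) s)
    (hmap₁ : ∀ s ∈ Set.Ioo c d, rr s ∈ Set.Ioo r₀ b₁)
    (hmap₂ : ∀ s ∈ Set.Ioo d e, rr s ∈ Set.Ioo b₁ r₁)
    (hrrm : Filter.Tendsto rr (nhdsWithin d (Set.Iio d)) (nhds b₁))
    (hrrp : Filter.Tendsto rr (nhdsWithin d (Set.Ioi d)) (nhds b₁))
    (hg : ∀ s ∈ Set.Ioo c d ∪ Set.Ioo d e,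
      HasDerivAt g ((1 / 16) * (ρ' (rr s)) ^ 2 / (ρ (rr s)) ^ 3) s)
    (hgm : Filter.Tendsto g (nhdsWithin d (Set.Iio d)) (nhds gdm))
    (hgp : Filter.Tendsto g (nhdsWithin d (Set.Ioi d)) (nhds gdp)) :
    Filter.Tendsto (fun s => (ρ (rr s)) ^ ((1 : ℝ) / 4) * u (rr s))
        (nhdsWithin d (Set.Iio d)) (nhds (ρm ^ ((1 : ℝ) / 4) * u b₁)) ∧
    Filter.Tendsto (fun s => (ρ (rr s)) ^ ((1 : ℝ) / 4) * u (rr s))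
        (nhdsWithin d (Set.Ioi d))
        (nhds (b₂ ^ ((1 : ℝ) / 4) * (ρm ^ ((1 : ℝ) / 4) * u b₁))) ∧
    Filter.Tendsto (fun s =>
        deriv (fun x => (ρ (rr x)) ^ ((1 : ℝ) / 4) * u (rr x)) s
          - ((1 / 4) * ρ' (rr s) / (ρ (rr s)) ^ ((3 : ℝ) / 2) + g s) *
              ((ρ (rr s)) ^ ((1 : ℝ) / 4) * u (rr s)))
        (nhdsWithin d (Set.Iio d))
        (nhds (ρm ^ (-(1 : ℝ) / 4) * u' b₁ - gdm * (ρm ^ ((1 : ℝ) / 4) * u b₁))) ∧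
    Filter.Tendsto (fun s =>
        deriv (fun x => (ρ (rr x)) ^ ((1 : ℝ) / 4) * u (rr x)) s
          - ((1 / 4) * ρ' (rr s) / (ρ (rr s)) ^ ((3 : ℝ) / 2) + g s) *
              ((ρ (rr s)) ^ ((1 : ℝ) / 4) * u (rr s)))
        (nhdsWithin d (Set.Ioi d))
        (nhds ((b₂ ^ ((1 : ℝ) / 4))⁻¹ *
            (ρm ^ (-(1 : ℝ) / 4) * u' b₁ - gdm * (ρm ^ ((1 : ℝ) / 4) * u b₁))
          + (gdm * b₂ ^ (-(1 : ℝ) / 4) - gdp * b₂ ^ ((1 : ℝ) / 4)) *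
              (ρm ^ ((1 : ℝ) / 4) * u b₁))) ∧
    (gdm * b₂ ^ (-(1 : ℝ) / 4) - gdp * b₂ ^ ((1 : ℝ) / 4) = 0 ↔
      gdm = Real.sqrt b₂ * gdp) := by
  have hneg : ∀ x : ℝ, 0 ≤ x → x ^ (-(1:ℝ)/4) = (x ^ ((1:ℝ)/4))⁻¹ := by
    intro x hx
    rw [show (-(1:ℝ)/4) = -((1:ℝ)/4) by norm_num, Real.rpow_neg hx]
  -- membership of the test intervals in the one-sided filters
  have hIio : Set.Ioo c d ∈ nhdsWithin d (Set.Iio d) :=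
    Ioo_mem_nhdsLT_of_mem ⟨hc, le_refl d⟩
  have hIoi : Set.Ioo d e ∈ nhdsWithin d (Set.Ioi d) :=
    Ioo_mem_nhdsGT_of_mem ⟨le_refl d, he⟩
  -- rr tends to b₁ from the correct sides
  have hrrm' : Filter.Tendsto rr (nhdsWithin d (Set.Iio d)) (nhdsWithin b₁ (Set.Iio b₁)) :=
    tendsto_nhdsWithin_iff.mpr ⟨hrrm,
      Filter.eventually_of_mem hIio fun s hs => (hmap₁ s hs).2⟩
  have hrrp' : Filter.Tendsto rr (nhdsWithin d (Set.Ioi d)) (nhdsWithin b₁ (Set.Ioi b₁)) :=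
    tendsto_nhdsWithin_iff.mpr ⟨hrrp,
      Filter.eventually_of_mem hIoi fun s hs => (hmap₂ s hs).1⟩
  have hρrm : Filter.Tendsto (fun s => ρ (rr s)) (nhdsWithin d (Set.Iio d)) (nhds ρm) :=
    hρm'.comp hrrm'
  have hρrp : Filter.Tendsto (fun s => ρ (rr s)) (nhdsWithin d (Set.Ioi d)) (nhds (b₂ * ρm)) :=
    hρp'.comp hrrp'
  have hum : Filter.Tendsto (fun s => u (rr s)) (nhdsWithin d (Set.Iio d)) (nhds (u b₁)) :=
    hucont.tendsto.comp hrrm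
  have hup : Filter.Tendsto (fun s => u (rr s)) (nhdsWithin d (Set.Ioi d)) (nhds (u b₁)) :=
    hucont.tendsto.comp hrrp
  have hu'm : Filter.Tendsto (fun s => u' (rr s)) (nhdsWithin d (Set.Iio d)) (nhds (u' b₁)) :=
    hu'cont.tendsto.comp hrrm
  have hu'p : Filter.Tendsto (fun s => u' (rr s)) (nhdsWithin d (Set.Ioi d)) (nhds (u' b₁)) :=
    hu'cont.tendsto.comp hrrp
  have hcont4m : ContinuousAt (fun y : ℝ => y ^ ((1:ℝ)/4)) ρm :=
    Real.continuousAt_rpow_const ρm _ (Or.inl hρm.ne')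
  have hcont4p : ContinuousAt (fun y : ℝ => y ^ ((1:ℝ)/4)) (b₂ * ρm) :=
    Real.continuousAt_rpow_const _ _ (Or.inl (mul_pos hb₂ hρm).ne')
  have T4m : Filter.Tendsto (fun s => (ρ (rr s)) ^ ((1:ℝ)/4)) (nhdsWithin d (Set.Iio d))
      (nhds (ρm ^ ((1:ℝ)/4))) := hcont4m.tendsto.comp hρrm
  have T4p : Filter.Tendsto (fun s => (ρ (rr s)) ^ ((1:ℝ)/4)) (nhdsWithin d (Set.Ioi d))
      (nhds ((b₂ * ρm) ^ ((1:ℝ)/4))) := hcont4p.tendsto.comp hρrp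
  -- pointwise simplification of the quasi-derivative
  have key : ∀ s ∈ Set.Ioo c d ∪ Set.Ioo d e,
      deriv (fun x => (ρ (rr x)) ^ ((1:ℝ)/4) * u (rr x)) s
        - ((1/4) * ρ' (rr s) / (ρ (rr s)) ^ ((3:ℝ)/2) + g s) *
            ((ρ (rr s)) ^ ((1:ℝ)/4) * u (rr s))
      = ((ρ (rr s)) ^ ((1:ℝ)/4))⁻¹ * u' (rr s)
          - g s * ((ρ (rr s)) ^ ((1:ℝ)/4) * u (rr s)) := by
    intro s hs
    have hrs : rr s ∈ Set.Ioo r₀ r₁ ∧ rr s ≠ b₁ := by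
      rcases hs with h | h
      · have h' := hmap₁ s h
        exact ⟨⟨h'.1, h'.2.trans hr₁⟩, ne_of_lt h'.2⟩
      · have h' := hmap₂ s h
        exact ⟨⟨hr₀.trans h'.1, h'.2⟩, (ne_of_lt h'.1).symm⟩
    have hapos : 0 < ρ (rr s) := hρpos _ hrs.1 hrs.2
    have hdrr := hrr s hs
    have hdρ : HasDerivAt (fun x => ρ (rr x)) (ρ' (rr s) * (1 / Real.sqrt (ρ (rr s)))) s :=
      (hρ _ hrs.1 hrs.2).comp s hdrr
    have hdu : HasDerivAt (fun x => u (rr x)) (u' (rr s) * (1 / Real.sqrt (ρ (rr s)))) s :=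
      (hu _ hrs.1).comp s hdrr
    have hdz : HasDerivAt (fun x => (ρ (rr x)) ^ ((1:ℝ)/4) * u (rr x))
        (ρ' (rr s) * (1 / Real.sqrt (ρ (rr s))) * ((1:ℝ)/4)
            * (ρ (rr s)) ^ ((1:ℝ)/4 - 1) * u (rr s)
          + (ρ (rr s)) ^ ((1:ℝ)/4) * (u' (rr s) * (1 / Real.sqrt (ρ (rr s))))) s :=
      (hdρ.rpow_const (Or.inl hapos.ne')).mul hdu
    rw [hdz.deriv]
    exact alg_id _ _ _ _ _ hapos
  -- simplified expression tendsto on the left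
  have T3 : Filter.Tendsto (fun s =>
        ((ρ (rr s)) ^ ((1:ℝ)/4))⁻¹ * u' (rr s)
          - g s * ((ρ (rr s)) ^ ((1:ℝ)/4) * u (rr s)))
      (nhdsWithin d (Set.Iio d))
      (nhds ((ρm ^ ((1:ℝ)/4))⁻¹ * u' b₁ - gdm * (ρm ^ ((1:ℝ)/4) * u b₁))) :=
    ((T4m.inv₀ (Real.rpow_pos_of_pos hρm _).ne').mul hu'm).sub (hgm.mul (T4m.mul hum))
  have T4 : Filter.Tendsto (fun s =>
        ((ρ (rr s)) ^ ((1:ℝ)/4))⁻¹ * u' (rr s)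
          - g s * ((ρ (rr s)) ^ ((1:ℝ)/4) * u (rr s)))
      (nhdsWithin d (Set.Ioi d))
      (nhds ((((b₂ * ρm) ^ ((1:ℝ)/4))⁻¹ * u' b₁
          - gdp * ((b₂ * ρm) ^ ((1:ℝ)/4) * u b₁)))) :=
    ((T4p.inv₀ (Real.rpow_pos_of_pos (mul_pos hb₂ hρm) _).ne').mul hu'p).sub
      (hgp.mul (T4p.mul hup))
  have hmulr : (b₂ * ρm) ^ ((1:ℝ)/4) = b₂ ^ ((1:ℝ)/4) * ρm ^ ((1:ℝ)/4) :=
    Real.mul_rpow hb₂.le hρm.le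
  have hX : (0:ℝ) < b₂ ^ ((1:ℝ)/4) := Real.rpow_pos_of_pos hb₂ _
  have hY : (0:ℝ) < ρm ^ ((1:ℝ)/4) := Real.rpow_pos_of_pos hρm _
  refine ⟨T4m.mul hum, ?_, ?_, ?_, ?_⟩
  · have heq : (b₂ * ρm) ^ ((1:ℝ)/4) * u b₁
        = b₂ ^ ((1:ℝ)/4) * (ρm ^ ((1:ℝ)/4) * u b₁) := by
      rw [hmulr]; ring
    exact heq ▸ T4p.mul hup
  · rw [hneg ρm hρm.le]
    refine T3.congr' ?_
    filter_upwards [hIio] with s hs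
    exact (key s (Or.inl hs)).symm
  · have heq : ((b₂ * ρm) ^ ((1:ℝ)/4))⁻¹ * u' b₁ - gdp * ((b₂ * ρm) ^ ((1:ℝ)/4) * u b₁)
        = (b₂ ^ ((1:ℝ)/4))⁻¹ *
            (ρm ^ (-(1:ℝ)/4) * u' b₁ - gdm * (ρm ^ ((1:ℝ)/4) * u b₁))
          + (gdm * b₂ ^ (-(1:ℝ)/4) - gdp * b₂ ^ ((1:ℝ)/4)) *
              (ρm ^ ((1:ℝ)/4) * u b₁) := by
      rw [hmulr, hneg ρm hρm.le, hneg b₂ hb₂.le, mul_inv]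
      field_simp
      ring
    rw [← heq]
    refine T4.congr' ?_
    filter_upwards [hIoi] with s hs
    exact (key s (Or.inr hs)).symm
  · have hsq : Real.sqrt b₂ = (b₂ ^ ((1:ℝ)/4)) ^ 2 := by
      rw [Real.sqrt_eq_rpow, ← Real.rpow_natCast (b₂ ^ ((1:ℝ)/4)) 2,
        ← Real.rpow_mul hb₂.le]
      norm_num
    rw [hsq, hneg b₂ hb₂.le, sub_eq_zero, ← div_eq_mul_inv, div_eq_iff hX.ne']
    constructor
    · intro h; rw [h]; ring
    · intro h; rw [h]; ring
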